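/- The set H = {z : ℕ×ℕ → ZMod 2 : ‖z‖ < ∞} is a subgroup of the product group (ZMod 2)^{ℕ×ℕ} (with pointwise addition mod 2), and, equipped with the metric d_H, H is a Polish group: d_H is a complete, separable metric on H, and addition on H is continuous with respect to d_H. -/

import Mathlib

open scoped ENNReal

/-- The weight of a point `(i,j) ∈ ℕ × ℕ`: `2 · 3^{-(i+1)}`. -/
noncomputable def wt (p : ℕ × ℕ) : ℝ≥0∞ := 2 * ((3 : ℝ≥0∞) ^ (p.1 + 1))⁻¹

/-- `‖S‖ = Σ_{(i,j) ∈ S} 2 · 3^{-(i+1)} ∈ [0,∞]` for `S ⊆ ℕ × ℕ`. -/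
noncomputable def nrmS (S : Set (ℕ × ℕ)) : ℝ≥0∞ := ∑' p, S.indicator wt p

lemma nrmS_mono {S T : Set (ℕ × ℕ)} (h : S ⊆ T) : nrmS S ≤ nrmS T :=
  ENNReal.tsum_le_tsum fun p =>
    Set.indicator_le_indicator_of_subset h (fun _ => zero_le) p

lemma nrmS_union_le (S T : Set (ℕ × ℕ)) : nrmS (S ∪ T) ≤ nrmS S + nrmS T := by
  rw [nrmS, nrmS, nrmS, ← ENNReal.tsum_add]
  refine ENNReal.tsum_le_tsum fun p => ?_
  by_cases hS : p ∈ S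
  · refine le_trans ?_ (le_add_right le_rfl)
    rw [Set.indicator_of_mem (Set.mem_union_left _ hS), Set.indicator_of_mem hS]
  · by_cases hT : p ∈ T
    · refine le_trans ?_ (le_add_left le_rfl)
      rw [Set.indicator_of_mem (Set.mem_union_right _ hT), Set.indicator_of_mem hT]
    · rw [Set.indicator_of_notMem (fun hc => hc.elim hS hT)]
      exact zero_le

lemma nrmS_empty : nrmS ∅ = 0 := by simp [nrmS]

/-- The support of `z : ℕ × ℕ → ZMod 2`. -/
def suppZ (z : ℕ × ℕ → ZMod 2) : Set (ℕ × ℕ) := {p | z p = 1}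

/-- `‖z‖` for `z : ℕ × ℕ → ZMod 2`. -/
noncomputable def nrmZ (z : ℕ × ℕ → ZMod 2) : ℝ≥0∞ := nrmS (suppZ z)

/-- `H = {z : ℕ × ℕ → ZMod 2 | ‖z‖ < ∞}`, as an (additive) subgroup of the product group
`ℕ × ℕ → ZMod 2` with pointwise addition mod 2. -/
noncomputable def Hgrp : AddSubgroup ((ℕ × ℕ) → ZMod 2) where
  carrier := {z | nrmZ z < ⊤}
  zero_mem' := by
    have h : suppZ 0 = ∅ := by ext p; simp [suppZ]
    simp [nrmZ, h, nrmS_empty]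
  add_mem' {z w} hz hw := by
    have hsub : suppZ (z + w) ⊆ suppZ z ∪ suppZ w := by
      intro p hp
      by_contra hc
      simp only [Set.mem_union, suppZ, Set.mem_setOf_eq, not_or] at hc
      have hdi : ∀ x : ZMod 2, x = 0 ∨ x = 1 := by decide
      have hz0 : z p = 0 := (hdi (z p)).resolve_right hc.1
      have hw0 : w p = 0 := (hdi (w p)).resolve_right hc.2
      have hp' : (z + w) p = 1 := hp
      rw [Pi.add_apply, hz0, hw0] at hp'
      exact absurd hp' (by decide)
    calc nrmZ (z + w) ≤ nrmS (suppZ z ∪ suppZ w) := nrmS_mono hsub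
      _ ≤ nrmZ z + nrmZ w := nrmS_union_le _ _
      _ < ⊤ := ENNReal.add_lt_top.2 ⟨hz, hw⟩
  neg_mem' {z} hz := by
    have h : suppZ (-z) = suppZ z := by
      ext p; simp [suppZ, CharTwo.neg_eq]
    simpa [nrmZ, h] using hz
/-- `φ(x) = Σ_i 2 · x i · 3^{-(i+1)}`, the standard map from `2^ℕ` onto the ternary Cantor
set (values of `x` read as `0, 1` in `ℝ`). -/
noncomputable def phiC (x : ℕ → ZMod 2) : ℝ :=
  ∑' i, 2 * ((x i).val : ℝ) * ((3 : ℝ) ^ (i + 1))⁻¹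

/-- The metric on `H`: `d_H(z,w) = Σ_j |φ(z(·,j)) − φ(w(·,j))|`, the `ℓ¹`-distance between
the corresponding points of `C^ℕ ∩ ℓ¹`. -/
noncomputable def dH (z w : ↥Hgrp) : ℝ :=
  ∑' j, |phiC (fun i => (z : (ℕ × ℕ) → ZMod 2) (i, j)) -
          phiC (fun i => (w : (ℕ × ℕ) → ZMod 2) (i, j))|

/-- The support of a permutation `g` of `ℕ × ℕ`. -/
def suppP (g : Equiv.Perm (ℕ × ℕ)) : Set (ℕ × ℕ) := {p | g p ≠ p}

lemma suppP_inv (g : Equiv.Perm (ℕ × ℕ)) : suppP g⁻¹ = suppP g := by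
  ext p
  simp only [suppP, Set.mem_setOf_eq, ne_eq]
  constructor
  · intro h hc
    exact h (by conv_lhs => rw [← hc]; simp ; )
  · intro h hc
    exact h (by conv_lhs => rw [← hc]; simp)

/-- `G = {g ∈ Sym(ℕ × ℕ) | ‖supp g‖ < ∞}`, as a subgroup of the symmetric group of
`ℕ × ℕ`. -/
noncomputable def Ggrp : Subgroup (Equiv.Perm (ℕ × ℕ)) where
  carrier := {g | nrmS (suppP g) < ⊤}
  one_mem' := by
    have h : suppP 1 = ∅ := by ext p; simp [suppP]
    simp [h, nrmS_empty]
  mul_mem' {f g} hf hg := by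
    have hsub : suppP (f * g) ⊆ suppP f ∪ suppP g := by
      intro p hp
      by_contra hc
      simp only [Set.mem_union, suppP, Set.mem_setOf_eq, ne_eq, not_or, not_not] at hc
      exact hp (by simp only [suppP, Set.mem_setOf_eq, Equiv.Perm.mul_apply, hc.2, hc.1] at *)
    calc nrmS (suppP (f * g)) ≤ nrmS (suppP f ∪ suppP g) := nrmS_mono hsub
      _ ≤ nrmS (suppP f) + nrmS (suppP g) := nrmS_union_le _ _
      _ < ⊤ := ENNReal.add_lt_top.2 ⟨hf, hg⟩
  inv_mem' {g} hg := by simpa [suppP_inv] using hg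

/-- The metric on `G`: `d(f,g) = ‖supp (f⁻¹ ∘ g)‖`. -/
noncomputable def dG (f g : ↥Ggrp) : ℝ :=
  (nrmS (suppP ((f : Equiv.Perm (ℕ × ℕ))⁻¹ * (g : Equiv.Perm (ℕ × ℕ))))).toReal

/-- The action of `G` on `H`: `g • h = h ∘ g⁻¹`. -/
noncomputable def actGH (g : ↥Ggrp) (h : ↥Hgrp) : ↥Hgrp :=
  ⟨fun p => (h : (ℕ × ℕ) → ZMod 2) (((g : Equiv.Perm (ℕ × ℕ)))⁻¹ p), by
    have hsub : suppZ (fun p => (h : (ℕ × ℕ) → ZMod 2) (((g : Equiv.Perm (ℕ × ℕ)))⁻¹ p)) ⊆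
        suppZ (h : (ℕ × ℕ) → ZMod 2) ∪ suppP (g : Equiv.Perm (ℕ × ℕ)) := by
      intro p hp
      by_cases hgp : ((g : Equiv.Perm (ℕ × ℕ)))⁻¹ p = p
      · left
        have : (h : (ℕ × ℕ) → ZMod 2) (((g : Equiv.Perm (ℕ × ℕ)))⁻¹ p) = 1 := hp
        rwa [hgp] at this
      · right
        have : p ∈ suppP ((g : Equiv.Perm (ℕ × ℕ)))⁻¹ := hgp
        rwa [suppP_inv] at this
    show nrmZ _ < ⊤
    calc nrmZ _ ≤ nrmS (suppZ (h : (ℕ × ℕ) → ZMod 2) ∪ suppP (g : Equiv.Perm (ℕ × ℕ))) :=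
          nrmS_mono hsub
      _ ≤ nrmZ (h : (ℕ × ℕ) → ZMod 2) + nrmS (suppP (g : Equiv.Perm (ℕ × ℕ))) :=
          nrmS_union_le _ _
      _ < ⊤ := ENNReal.add_lt_top.2 ⟨h.2, g.2⟩⟩


lemma tail_summable (k : ℕ) : Summable (fun n : ℕ => 2 * ((3:ℝ) ^ (n + k + 1))⁻¹) := by
  have hgeo : Summable (fun n : ℕ => (2 * ((3:ℝ) ^ (k + 1))⁻¹) * (1/3 : ℝ) ^ n) :=
    (summable_geometric_of_lt_one (by norm_num) (by norm_num)).mul_left _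
  refine hgeo.congr fun n => ?_
  rw [div_pow, one_pow, show n + k + 1 = n + (k + 1) by ring, pow_add]
  field_simp; ring

lemma tail_sum (k : ℕ) : ∑' n : ℕ, 2 * ((3:ℝ) ^ (n + k + 1))⁻¹ = ((3:ℝ) ^ k)⁻¹ := by
  have h1 : ∀ n : ℕ, 2 * ((3:ℝ) ^ (n + k + 1))⁻¹ = (2 * ((3:ℝ) ^ (k + 1))⁻¹) * (1/3 : ℝ) ^ n := by
    intro n
    rw [div_pow, one_pow, show n + k + 1 = n + (k + 1) by ring, pow_add]
    field_simp
  rw [tsum_congr h1, tsum_mul_left, tsum_geometric_of_lt_one (by norm_num) (by norm_num)]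
  rw [pow_succ]
  have h3 : (3:ℝ) ^ k ≠ 0 := by positivity
  field_simp; ring

lemma c_summable : Summable (fun i : ℕ => 2 * ((3:ℝ) ^ (i + 1))⁻¹) := by
  simpa using tail_summable 0

lemma val_sub_abs (a b : ZMod 2) :
    |((a.val : ℝ)) - (b.val : ℝ)| = if a + b = 1 then 1 else 0 := by
  have h : ∀ c : ZMod 2, c = 0 ∨ c = 1 := by decide
  rcases h a with ha | ha <;> rcases h b with hb | hb <;> subst ha <;> subst hb <;>
    first
      | (rw [if_pos (by decide)]; simp [ZMod.val_one])
      | (rw [if_neg (by decide)]; simp [ZMod.val_one])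

noncomputable def nr (x : ℕ → ZMod 2) : ℝ :=
  ∑' i, if x i = 1 then 2 * ((3 : ℝ) ^ (i + 1))⁻¹ else 0

lemma val_le_one (a : ZMod 2) : ((a.val : ℝ)) ≤ 1 := by
  have h : ∀ c : ZMod 2, c = 0 ∨ c = 1 := by decide
  rcases h a with ha | ha <;> subst ha <;> simp [ZMod.val_one]

lemma summable_phi (x : ℕ → ZMod 2) :
    Summable (fun i => 2 * ((x i).val : ℝ) * ((3 : ℝ) ^ (i + 1))⁻¹) := by
  refine Summable.of_nonneg_of_le (fun i => by positivity) (fun i => ?_) c_summable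
  have := val_le_one (x i)
  have h2 : (0:ℝ) ≤ ((3:ℝ) ^ (i+1))⁻¹ := by positivity
  nlinarith

lemma summable_nr (x : ℕ → ZMod 2) :
    Summable (fun i => if x i = 1 then 2 * ((3 : ℝ) ^ (i + 1))⁻¹ else 0) := by
  refine Summable.of_nonneg_of_le (fun i => by positivity) (fun i => ?_) c_summable
  split
  · exact le_rfl
  · positivity

lemma nr_nonneg (x : ℕ → ZMod 2) : 0 ≤ nr x :=
  tsum_nonneg fun i => by positivity

lemma phiC_sub (x y : ℕ → ZMod 2) :
    phiC x - phiC y =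
      ∑' i, (2 * ((x i).val : ℝ) * ((3 : ℝ) ^ (i + 1))⁻¹
             - 2 * ((y i).val : ℝ) * ((3 : ℝ) ^ (i + 1))⁻¹) :=
  (Summable.tsum_sub (summable_phi x) (summable_phi y)).symm

lemma abs_h_eq (x y : ℕ → ZMod 2) (i : ℕ) :
    |2 * ((x i).val : ℝ) * ((3 : ℝ) ^ (i + 1))⁻¹
      - 2 * ((y i).val : ℝ) * ((3 : ℝ) ^ (i + 1))⁻¹|
    = if (x + y) i = 1 then 2 * ((3 : ℝ) ^ (i + 1))⁻¹ else 0 := by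
  have h1 : 2 * ((x i).val : ℝ) * ((3 : ℝ) ^ (i + 1))⁻¹
      - 2 * ((y i).val : ℝ) * ((3 : ℝ) ^ (i + 1))⁻¹
      = 2 * (((x i).val : ℝ) - ((y i).val : ℝ)) * ((3 : ℝ) ^ (i + 1))⁻¹ := by ring
  rw [h1, abs_mul, abs_mul, abs_two, val_sub_abs, abs_inv, abs_pow]
  have h2 : |(3:ℝ)| = 3 := by norm_num
  rw [h2, Pi.add_apply]
  split_ifs <;> ring

lemma abs_phiC_sub_le (x y : ℕ → ZMod 2) : |phiC x - phiC y| ≤ nr (x + y) := by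
  rw [phiC_sub]
  set f : ℕ → ℝ := fun i => 2 * ((x i).val : ℝ) * ((3 : ℝ) ^ (i + 1))⁻¹
             - 2 * ((y i).val : ℝ) * ((3 : ℝ) ^ (i + 1))⁻¹ with hf
  have hs : Summable f := (summable_phi x).sub (summable_phi y)
  have habs : Summable (fun i => ‖f i‖) := by
    simpa only [Real.norm_eq_abs] using hs.abs
  have h1 : |∑' i, f i| ≤ ∑' i, ‖f i‖ := norm_tsum_le_tsum_norm habs
  refine le_trans h1 (le_of_eq (tsum_congr fun i => ?_))
  rw [Real.norm_eq_abs, hf]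
  exact abs_h_eq x y i

lemma zmod_eq_of_add_ne_one : ∀ a b : ZMod 2, a + b ≠ 1 → a = b := by decide
lemma zmod_add_eq_one_of_ne : ∀ a b : ZMod 2, a ≠ b → a + b = 1 := by decide
lemma zmod_add_self_ne_one : ∀ a b : ZMod 2, a = b → a + b ≠ 1 := by decide

/-- Generic lower bound for a series whose first nonzero term dominates the tail. -/
lemma key_low (f : ℕ → ℝ) (i₀ : ℕ) (hs : Summable f)
    (h0 : ∀ i < i₀, f i = 0) (hb : ∀ i, |f i| ≤ 2 * ((3:ℝ) ^ (i + 1))⁻¹)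
    (hmain : |f i₀| = 2 * ((3:ℝ) ^ (i₀ + 1))⁻¹) :
    ((3:ℝ) ^ (i₀ + 1))⁻¹ ≤ |∑' n, f n| := by
  classical
  have hG1 : Summable (fun n => if n = i₀ then f n else 0) := by
    apply summable_of_ne_finset_zero (s := {i₀})
    intro b hb'
    simp only [Finset.mem_singleton] at hb'
    simp [hb']
  have hGs : Summable (fun n => if n = i₀ then 0 else f n) := by
    refine (hs.sub hG1).congr fun n => ?_
    by_cases h : n = i₀ <;> simp [h]
  have hsplit : ∑' n, f n = f i₀ + ∑' n, (if n = i₀ then 0 else f n) :=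
    Summable.tsum_eq_add_tsum_ite hs i₀
  have hGabs : Summable (fun n => |if n = i₀ then 0 else f n|) := hGs.abs
  have hGbound : |∑' n, (if n = i₀ then 0 else f n)| ≤ ((3:ℝ) ^ (i₀ + 1))⁻¹ := by
    have h1 : |∑' n, (if n = i₀ then 0 else f n)| ≤ ∑' n, |if n = i₀ then 0 else f n| := by
      simpa only [Real.norm_eq_abs] using
        norm_tsum_le_tsum_norm (f := fun n => if n = i₀ then 0 else f n)
          (by simpa only [Real.norm_eq_abs] using hGabs)
    refine h1.trans ?_
    have h2 := Summable.sum_add_tsum_nat_add (f := fun n => |if n = i₀ then 0 else f n|) (i₀+1) hGabs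
    have h3 : ∑ n ∈ Finset.range (i₀+1), |if n = i₀ then 0 else f n| = 0 := by
      refine Finset.sum_eq_zero fun n hn => ?_
      rw [Finset.mem_range, Nat.lt_succ_iff] at hn
      rcases lt_or_eq_of_le hn with h | h
      · rw [if_neg (Nat.ne_of_lt h), h0 n h, abs_zero]
      · rw [if_pos h, abs_zero]
    rw [← h2, h3, zero_add]
    have h4 : ∀ n : ℕ, |if n + (i₀+1) = i₀ then 0 else f (n + (i₀+1))| ≤
        2 * ((3:ℝ) ^ (n + (i₀+1) + 1))⁻¹ := by
      intro n
      rw [if_neg (by omega)]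
      exact hb _
    calc ∑' n, |if n + (i₀+1) = i₀ then 0 else f (n + (i₀+1))|
        ≤ ∑' n, 2 * ((3:ℝ) ^ (n + (i₀+1) + 1))⁻¹ :=
          Summable.tsum_le_tsum h4 (hGabs.comp_injective (add_left_injective _)) (tail_summable _)
      _ = ((3:ℝ) ^ (i₀+1))⁻¹ := tail_sum _
  have habs : |f i₀| ≤ |∑' n, f n| + |∑' n, (if n = i₀ then 0 else f n)| := by
    calc |f i₀| = |(∑' n, f n) - ∑' n, (if n = i₀ then 0 else f n)| := by
          rw [hsplit]; ring_nf
      _ ≤ |∑' n, f n| + |∑' n, (if n = i₀ then 0 else f n)| := abs_sub _ _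
  rw [hmain] at habs
  linarith [hGbound]

/-- Generic upper bound: a sub-geometric series vanishing below `i₀`. -/
lemma key_up (g : ℕ → ℝ) (i₀ : ℕ) (hs : Summable g)
    (hnn : ∀ i, 0 ≤ g i) (h0 : ∀ i < i₀, g i = 0)
    (hb : ∀ i, g i ≤ 2 * ((3:ℝ) ^ (i + 1))⁻¹) :
    ∑' n, g n ≤ 3 * ((3:ℝ) ^ (i₀ + 1))⁻¹ := by
  have hKs : Summable (fun n : ℕ => if n < i₀ then 0 else 2 * ((3:ℝ) ^ (n+1))⁻¹) := by
    refine Summable.of_nonneg_of_le (fun i => ?_) (fun i => ?_) c_summable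
    · split
      · exact le_rfl
      · positivity
    · split
      · positivity
      · exact le_rfl
  have hgK : ∑' n, g n ≤ ∑' n, (if n < i₀ then 0 else 2 * ((3:ℝ) ^ (n+1))⁻¹) := by
    refine Summable.tsum_le_tsum (fun n => ?_) hs hKs
    by_cases h : n < i₀
    · rw [if_pos h, h0 n h]
    · rw [if_neg h]; exact hb n
  have hKsum : ∑' n, (if n < i₀ then 0 else 2 * ((3:ℝ) ^ (n+1))⁻¹) = ((3:ℝ) ^ i₀)⁻¹ := by
    have h2 := Summable.sum_add_tsum_nat_add
      (f := fun n => if n < i₀ then 0 else 2 * ((3:ℝ) ^ (n+1))⁻¹) i₀ hKs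
    have h3 : ∑ n ∈ Finset.range i₀, (if n < i₀ then 0 else 2 * ((3:ℝ) ^ (n+1))⁻¹) = 0 := by
      refine Finset.sum_eq_zero fun n hn => ?_
      rw [Finset.mem_range] at hn
      rw [if_pos hn]
    have h4 : ∀ n : ℕ, (if n + i₀ < i₀ then 0 else 2 * ((3:ℝ) ^ (n + i₀ + 1))⁻¹)
        = 2 * ((3:ℝ) ^ (n + i₀ + 1))⁻¹ := fun n => if_neg (by omega)
    rw [← h2, h3, zero_add, tsum_congr h4, tail_sum]
  have hpow : ((3:ℝ) ^ i₀)⁻¹ = 3 * ((3:ℝ) ^ (i₀+1))⁻¹ := by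
    rw [pow_succ]
    have : (3:ℝ) ^ i₀ ≠ 0 := by positivity
    field_simp
  rw [hKsum, hpow] at hgK
  exact hgK

lemma nr_le_abs (x y : ℕ → ZMod 2) : nr (x + y) ≤ 3 * |phiC x - phiC y| := by
  classical
  by_cases hxy : ∃ i, x i + y i = 1
  · have hi₀ : x (Nat.find hxy) + y (Nat.find hxy) = 1 := Nat.find_spec hxy
    have hlt : ∀ i < Nat.find hxy, x i = y i := fun i hi =>
      zmod_eq_of_add_ne_one _ _ (Nat.find_min hxy hi)
    have hlow := key_low
      (fun i => 2 * ((x i).val : ℝ) * ((3 : ℝ) ^ (i + 1))⁻¹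
             - 2 * ((y i).val : ℝ) * ((3 : ℝ) ^ (i + 1))⁻¹) (Nat.find hxy)
      ((summable_phi x).sub (summable_phi y))
      (fun i hi => by rw [hlt i hi]; ring)
      (fun i => by
        rw [abs_h_eq x y i]
        split
        · exact le_rfl
        · positivity)
      (by rw [abs_h_eq x y (Nat.find hxy), Pi.add_apply, if_pos hi₀])
    rw [← phiC_sub] at hlow
    have hup := key_up
      (fun i => if (x + y) i = 1 then 2 * ((3 : ℝ) ^ (i + 1))⁻¹ else 0) (Nat.find hxy)
      (summable_nr _)
      (fun i => by positivity)
      (fun i hi => if_neg (by rw [Pi.add_apply]; exact zmod_add_self_ne_one _ _ (hlt i hi)))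
      (fun i => by
        split
        · exact le_rfl
        · positivity)
    rw [nr]
    refine hup.trans ?_
    linarith [hlow]
  · push_neg at hxy
    have h0 : nr (x + y) = 0 := by
      rw [nr]
      have h1 : ∀ i : ℕ, (if (x + y) i = 1 then 2 * ((3 : ℝ) ^ (i + 1))⁻¹ else 0) = 0 :=
        fun i => if_neg (hxy i)
      rw [tsum_congr h1, tsum_zero]
    rw [h0]
    positivity

-- ENNReal bridge
noncomputable def nrm1 (x : ℕ → ZMod 2) : ℝ≥0∞ :=
  ∑' i, if x i = 1 then 2 * ((3 : ℝ≥0∞) ^ (i + 1))⁻¹ else 0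

lemma enn_term_ne_top (i : ℕ) : (2 : ℝ≥0∞) * ((3 : ℝ≥0∞) ^ (i + 1))⁻¹ ≠ ⊤ := by
  refine ENNReal.mul_ne_top (by norm_num) ?_
  simp [pow_eq_zero_iff]

lemma wt_ne_top (p : ℕ × ℕ) : wt p ≠ ⊤ := enn_term_ne_top p.1

lemma wt_pos (p : ℕ × ℕ) : 0 < wt p := by
  refine ENNReal.mul_pos (by norm_num) ?_
  simp [ENNReal.inv_ne_zero, ENNReal.pow_ne_top (show (3:ℝ≥0∞) ≠ ⊤ by norm_num)]

lemma enn_term_toReal (i : ℕ) :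
    ((2 : ℝ≥0∞) * ((3 : ℝ≥0∞) ^ (i + 1))⁻¹).toReal = 2 * ((3 : ℝ) ^ (i + 1))⁻¹ := by
  rw [ENNReal.toReal_mul, ENNReal.toReal_inv, ENNReal.toReal_pow]
  norm_num

lemma nrm1_ne_top (x : ℕ → ZMod 2) : nrm1 x ≠ ⊤ := by
  have hle : nrm1 x ≤ ∑' i : ℕ, (2 : ℝ≥0∞) * ((3 : ℝ≥0∞) ^ (i + 1))⁻¹ := by
    refine ENNReal.tsum_le_tsum fun i => ?_
    split
    · exact le_rfl
    · exact zero_le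
  have hgeo : ∑' i : ℕ, (2 : ℝ≥0∞) * ((3 : ℝ≥0∞) ^ (i + 1))⁻¹ ≠ ⊤ := by
    have h1 : ∀ i : ℕ, (2 : ℝ≥0∞) * ((3 : ℝ≥0∞) ^ (i + 1))⁻¹
        = (2 * 3⁻¹) * (3⁻¹ : ℝ≥0∞) ^ i := by
      intro i
      rw [pow_succ, ENNReal.mul_inv (by norm_num) (by norm_num), ← ENNReal.inv_pow]
      ring
    rw [tsum_congr h1, ENNReal.tsum_mul_left, ENNReal.tsum_geometric]
    refine ENNReal.mul_ne_top (ENNReal.mul_ne_top (by norm_num) ?_) ?_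
    · simp
    · rw [Ne, ENNReal.inv_eq_top, tsub_eq_zero_iff_le]
      exact not_le.mpr (ENNReal.inv_lt_one.mpr (by norm_num))
  exact ne_top_of_le_ne_top hgeo hle

lemma nrm1_toReal (x : ℕ → ZMod 2) : (nrm1 x).toReal = nr x := by
  rw [nrm1, ENNReal.tsum_toReal_eq]
  · refine tsum_congr fun i => ?_
    split
    · exact enn_term_toReal i
    · simp
  · intro i
    split
    · exact enn_term_ne_top i
    · simp

lemma nrmZ_eq (z : (ℕ × ℕ) → ZMod 2) : nrmZ z = ∑' j, nrm1 (fun i => z (i, j)) := by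
  rw [nrmZ, nrmS]
  have h1 : ∑' p : ℕ × ℕ, (suppZ z).indicator wt p
      = ∑' p : ℕ × ℕ, (suppZ z).indicator wt (p.2, p.1) :=
    ((Equiv.prodComm ℕ ℕ).tsum_eq _).symm
  rw [h1, ENNReal.tsum_prod']
  refine tsum_congr fun j => tsum_congr fun i => ?_
  classical
  rw [Set.indicator_apply]
  exact if_congr Iff.rfl rfl rfl

lemma finset_sum_le_nrmS {S : Set (ℕ × ℕ)} {F : Finset (ℕ × ℕ)} (h : ↑F ⊆ S) :
    ∑ p ∈ F, wt p ≤ nrmS S := by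
  classical
  have h1 : ∑ p ∈ F, wt p = ∑ p ∈ F, S.indicator wt p := by
    refine Finset.sum_congr rfl fun p hp => ?_
    rw [Set.indicator_of_mem (h hp)]
  rw [h1, nrmS]
  exact ENNReal.sum_le_tsum F

lemma nrmS_le_of_forall_finset {S : Set (ℕ × ℕ)} {c : ℝ≥0∞}
    (h : ∀ F : Finset (ℕ × ℕ), ↑F ⊆ S → ∑ p ∈ F, wt p ≤ c) : nrmS S ≤ c := by
  classical
  rw [nrmS, ENNReal.tsum_eq_iSup_sum]
  refine iSup_le fun F => ?_
  have h1 : ∑ p ∈ F, S.indicator wt p = ∑ p ∈ F.filter (· ∈ S), wt p := by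
    rw [Finset.sum_filter]
    refine Finset.sum_congr rfl fun p _ => ?_
    rw [Set.indicator_apply]
  rw [h1]
  refine h _ fun p hp => ?_
  simp only [Finset.coe_filter, Set.mem_setOf_eq] at hp
  exact hp.2

-- dH comparison lemmas
lemma coe_add_Hgrp (z w : ↥Hgrp) : ((z + w : ↥Hgrp) : (ℕ × ℕ) → ZMod 2) = ↑z + ↑w := rfl

lemma nrmZ_Hτης (z : ↥Hgrp) : True := trivial

lemma nrmZ_add_ne_top (z w : ↥Hgrp) : nrmZ ((z : (ℕ × ℕ) → ZMod 2) + ↑w) ≠ ⊤ := by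
  have h : nrmZ ((z + w : ↥Hgrp) : (ℕ × ℕ) → ZMod 2) < ⊤ := (z + w : ↥Hgrp).2
  exact ne_of_lt h

lemma col_add (z w : (ℕ × ℕ) → ZMod 2) (j : ℕ) :
    (fun i => (z + w) (i, j)) = (fun i => z (i, j)) + (fun i => w (i, j)) := rfl

lemma summable_G (z w : ↥Hgrp) :
    Summable (fun j => nr (fun i => ((z : (ℕ × ℕ) → ZMod 2) + ↑w) (i, j))) := by
  have h1 : Summable (fun j => (nrm1 (fun i => ((z : (ℕ × ℕ) → ZMod 2) + ↑w) (i, j))).toReal) := by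
    refine ENNReal.summable_toReal ?_
    rw [← nrmZ_eq]
    exact nrmZ_add_ne_top z w
  exact h1.congr fun j => nrm1_toReal _

lemma tsum_G (z w : ↥Hgrp) :
    ∑' j, nr (fun i => ((z : (ℕ × ℕ) → ZMod 2) + ↑w) (i, j))
      = (nrmZ ((z : (ℕ × ℕ) → ZMod 2) + ↑w)).toReal := by
  rw [nrmZ_eq, ENNReal.tsum_toReal_eq (fun j => nrm1_ne_top _)]
  exact tsum_congr fun j => (nrm1_toReal _).symm

lemma dH_term_le (z w : ↥Hgrp) (j : ℕ) :
    |phiC (fun i => (z : (ℕ × ℕ) → ZMod 2) (i, j)) -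
      phiC (fun i => (w : (ℕ × ℕ) → ZMod 2) (i, j))|
    ≤ nr (fun i => ((z : (ℕ × ℕ) → ZMod 2) + ↑w) (i, j)) := by
  rw [col_add]
  exact abs_phiC_sub_le _ _

lemma summable_dH (z w : ↥Hgrp) :
    Summable (fun j => |phiC (fun i => (z : (ℕ × ℕ) → ZMod 2) (i, j)) -
      phiC (fun i => (w : (ℕ × ℕ) → ZMod 2) (i, j))|) :=
  Summable.of_nonneg_of_le (fun j => abs_nonneg _) (dH_term_le z w) (summable_G z w)

lemma dH_le (z w : ↥Hgrp) : dH z w ≤ (nrmZ ((z : (ℕ × ℕ) → ZMod 2) + ↑w)).toReal := by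
  rw [dH, ← tsum_G z w]
  exact Summable.tsum_le_tsum (dH_term_le z w) (summable_dH z w) (summable_G z w)

lemma le_dH (z w : ↥Hgrp) : (nrmZ ((z : (ℕ × ℕ) → ZMod 2) + ↑w)).toReal ≤ 3 * dH z w := by
  rw [dH, ← tsum_G z w, ← tsum_mul_left]
  refine Summable.tsum_le_tsum (fun j => ?_) (summable_G z w) ((summable_dH z w).mul_left 3)
  rw [col_add]
  exact nr_le_abs _ _

lemma dH_nonneg (z w : ↥Hgrp) : 0 ≤ dH z w := tsum_nonneg fun j => abs_nonneg _

lemma zmod_ne_one_eq_zero : ∀ a : ZMod 2, a ≠ 1 → a = 0 := by decide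

lemma nrmZ_add_le (a b : (ℕ × ℕ) → ZMod 2) : nrmZ (a + b) ≤ nrmZ a + nrmZ b := by
  have hsub : suppZ (a + b) ⊆ suppZ a ∪ suppZ b := by
    intro p hp
    by_contra hc
    simp only [Set.mem_union, suppZ, Set.mem_setOf_eq, not_or] at hc
    have ha : a p = 0 := zmod_ne_one_eq_zero _ hc.1
    have hb : b p = 0 := zmod_ne_one_eq_zero _ hc.2
    have hp' : (a + b) p = 1 := hp
    rw [Pi.add_apply, ha, hb] at hp'
    exact absurd hp' (by decide)
  calc nrmZ (a + b) ≤ nrmS (suppZ a ∪ suppZ b) := nrmS_mono hsub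
    _ ≤ nrmZ a + nrmZ b := nrmS_union_le _ _

lemma wt_le_nrmZ {v : (ℕ × ℕ) → ZMod 2} {p : ℕ × ℕ} (h : v p = 1) : wt p ≤ nrmZ v := by
  rw [nrmZ, nrmS]
  have h2 := ENNReal.le_tsum (f := (suppZ v).indicator wt) p
  have h3 : (suppZ v).indicator wt p = wt p :=
    Set.indicator_of_mem (show p ∈ suppZ v from h) wt
  rw [h3] at h2
  exact h2

lemma hfin_ind (F : Finset (ℕ × ℕ)) :
    nrmZ (fun p => if p ∈ F then (1 : ZMod 2) else 0) < ⊤ := by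
  rw [nrmZ]
  refine lt_of_le_of_lt (nrmS_mono (show suppZ _ ⊆ ↑F from ?_)) ?_
  · intro p hp
    by_contra h
    have h1 : (if p ∈ F then (1 : ZMod 2) else 0) = 1 := hp
    rw [if_neg (by simpa using h)] at h1
    exact absurd h1 (by decide)
  · rw [nrmS, tsum_eq_sum (s := F)
      (fun p hp => Set.indicator_of_notMem (by simpa using hp) _)]
    exact ENNReal.sum_lt_top.mpr fun p _ =>
      lt_of_le_of_lt (Set.indicator_le_self _ _ p) (lt_top_iff_ne_top.mpr (wt_ne_top p))

/-- `H = {z : ℕ × ℕ → ZMod 2 | ‖z‖ < ∞}` is a subgroup of the product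
group `(ZMod 2)^(ℕ × ℕ)` with pointwise addition mod 2, and, equipped with `d_H`, `H` is a
Polish group: `d_H` is a complete, separable metric on `H`, and addition on `H` is
continuous with respect to `d_H`. -/
theorem statement10 :
    -- `H` is a subgroup of the product group
    (∃ S : AddSubgroup ((ℕ × ℕ) → ZMod 2), (S : Set ((ℕ × ℕ) → ZMod 2)) = {z | nrmZ z < ⊤}) ∧
    -- `d_H` is a metric on `H`
    (∀ z w : ↥Hgrp, 0 ≤ dH z w) ∧
    (∀ z w : ↥Hgrp, dH z w = dH w z) ∧
    (∀ z w : ↥Hgrp, dH z w = 0 ↔ z = w) ∧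
    (∀ z w v : ↥Hgrp, dH z v ≤ dH z w + dH w v) ∧
    -- `d_H` is complete
    (∀ u : ℕ → ↥Hgrp,
      (∀ ε : ℝ, 0 < ε → ∃ N : ℕ, ∀ m ≥ N, ∀ n ≥ N, dH (u m) (u n) < ε) →
      ∃ z : ↥Hgrp, ∀ ε : ℝ, 0 < ε → ∃ N : ℕ, ∀ n ≥ N, dH (u n) z < ε) ∧
    -- `d_H` is separable
    (∃ D : Set ↥Hgrp, D.Countable ∧ ∀ z : ↥Hgrp, ∀ ε : ℝ, 0 < ε → ∃ w ∈ D, dH z w < ε) ∧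
    -- addition on `H` is continuous with respect to `d_H`
    (∀ z w : ↥Hgrp, ∀ ε : ℝ, 0 < ε → ∃ δ : ℝ, 0 < δ ∧ ∀ z' w' : ↥Hgrp,
      dH z z' < δ → dH w w' < δ → dH (z + w) (z' + w') < ε) := by
  classical
  refine ⟨⟨Hgrp, rfl⟩, dH_nonneg, ?_, ?_, ?_, ?_, ?_, ?_⟩
  · -- symmetry
    intro z w
    exact tsum_congr fun j => abs_sub_comm _ _
  · -- dH z w = 0 ↔ z = w
    intro z w
    constructor
    · intro h
      have h2 := le_dH z w
      rw [h] at h2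
      have h3 : (nrmZ ((z : (ℕ × ℕ) → ZMod 2) + ↑w)).toReal = 0 := by
        have h4 := ENNReal.toReal_nonneg (a := nrmZ ((z : (ℕ × ℕ) → ZMod 2) + ↑w))
        linarith
      have h5 : nrmZ ((z : (ℕ × ℕ) → ZMod 2) + ↑w) = 0 := by
        rcases (ENNReal.toReal_eq_zero_iff _).mp h3 with h | h
        · exact h
        · exact absurd h (nrmZ_add_ne_top z w)
      refine Subtype.ext (funext fun p => ?_)
      refine zmod_eq_of_add_ne_one _ _ fun hc => ?_
      have h6 := wt_le_nrmZ (v := (z : (ℕ × ℕ) → ZMod 2) + ↑w) (p := p) hc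
      rw [h5] at h6
      exact (ne_of_gt (wt_pos p)) (le_antisymm h6 (zero_le))
    · intro h
      subst h
      rw [dH]
      simp
  · -- triangle
    intro z w v
    rw [dH, dH, dH, ← Summable.tsum_add (summable_dH z w) (summable_dH w v)]
    exact Summable.tsum_le_tsum (fun j => abs_sub_le _ _ _)
      (summable_dH z v) ((summable_dH z w).add (summable_dH w v))
  · -- completeness
    intro u hu
    have he_cauchy : ∀ ε : ℝ≥0∞, 0 < ε → ε ≠ ⊤ →
        ∃ N, ∀ m ≥ N, ∀ n ≥ N, nrmZ ((u m : (ℕ × ℕ) → ZMod 2) + ↑(u n)) < ε := by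
      intro ε hε hεtop
      have hεr : 0 < ε.toReal := ENNReal.toReal_pos (ne_of_gt hε) hεtop
      obtain ⟨N, hN⟩ := hu (ε.toReal / 3) (by linarith)
      refine ⟨N, fun m hm n hn => ?_⟩
      have h1 := le_dH (u m) (u n)
      have h2 := hN m hm n hn
      have h3 : (nrmZ ((u m : (ℕ × ℕ) → ZMod 2) + ↑(u n))).toReal < ε.toReal := by linarith
      exact (ENNReal.toReal_lt_toReal (nrmZ_add_ne_top _ _) hεtop).mp h3
    have hNp : ∀ p : ℕ × ℕ, ∃ N, ∀ m ≥ N, ∀ n ≥ N,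
        (u m : (ℕ × ℕ) → ZMod 2) p = (u n : (ℕ × ℕ) → ZMod 2) p := by
      intro p
      obtain ⟨N, hN⟩ := he_cauchy (wt p) (wt_pos p) (wt_ne_top p)
      refine ⟨N, fun m hm n hn => ?_⟩
      by_contra hne
      have h1 : ((u m : (ℕ × ℕ) → ZMod 2) + ↑(u n)) p = 1 := zmod_add_eq_one_of_ne _ _ hne
      exact lt_irrefl _ (lt_of_le_of_lt (wt_le_nrmZ h1) (hN m hm n hn))
    choose N₀ hN₀ using hNp
    set z : (ℕ × ℕ) → ZMod 2 := fun p => (u (N₀ p) : (ℕ × ℕ) → ZMod 2) p with hz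
    have hz_agree : ∀ p : ℕ × ℕ, ∀ n, N₀ p ≤ n → (u n : (ℕ × ℕ) → ZMod 2) p = z p :=
      fun p n hn => hN₀ p n hn (N₀ p) le_rfl
    have claim : ∀ (n N' : ℕ) (δ : ℝ≥0∞),
        (∀ m ≥ N', nrmZ ((u n : (ℕ × ℕ) → ZMod 2) + ↑(u m)) < δ) →
        nrmZ ((u n : (ℕ × ℕ) → ZMod 2) + z) ≤ δ := by
      intro n N' δ hδ
      rw [nrmZ]
      refine nrmS_le_of_forall_finset fun F hF => ?_
      set M := max N' (F.sup N₀) with hM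
      have hFsub : ↑F ⊆ suppZ ((u n : (ℕ × ℕ) → ZMod 2) + ↑(u M)) := by
        intro p hp
        have hzM : (u M : (ℕ × ℕ) → ZMod 2) p = z p :=
          hz_agree p M (le_trans (Finset.le_sup (Finset.mem_coe.mp hp)) (le_max_right _ _))
        have h1 : ((u n : (ℕ × ℕ) → ZMod 2) + z) p = 1 := hF hp
        show ((u n : (ℕ × ℕ) → ZMod 2) + ↑(u M)) p = 1
        rw [Pi.add_apply] at h1 ⊢
        rw [hzM]
        exact h1
      calc ∑ p ∈ F, wt p ≤ nrmS (suppZ ((u n : (ℕ × ℕ) → ZMod 2) + ↑(u M))) :=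
            finset_sum_le_nrmS hFsub
        _ = nrmZ ((u n : (ℕ × ℕ) → ZMod 2) + ↑(u M)) := rfl
        _ ≤ δ := le_of_lt (hδ M (le_max_left _ _))
    obtain ⟨K, hK⟩ := he_cauchy 1 one_pos ENNReal.one_ne_top
    have hzK : nrmZ ((u K : (ℕ × ℕ) → ZMod 2) + z) ≤ 1 :=
      claim K K 1 (fun m hm => hK K le_rfl m hm)
    have hzmem : nrmZ z < ⊤ := by
      have hsub : suppZ z ⊆ suppZ ((u K : (ℕ × ℕ) → ZMod 2))
          ∪ suppZ ((u K : (ℕ × ℕ) → ZMod 2) + z) := by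
        intro p hp
        by_cases h : (u K : (ℕ × ℕ) → ZMod 2) p = 1
        · exact Or.inl h
        · refine Or.inr ?_
          show ((u K : (ℕ × ℕ) → ZMod 2) + z) p = 1
          rw [Pi.add_apply, zmod_ne_one_eq_zero _ h, zero_add]
          exact hp
      calc nrmZ z ≤ nrmS (suppZ ((u K : (ℕ × ℕ) → ZMod 2))
            ∪ suppZ ((u K : (ℕ × ℕ) → ZMod 2) + z)) := nrmS_mono hsub
        _ ≤ nrmZ ((u K : (ℕ × ℕ) → ZMod 2)) + nrmZ ((u K : (ℕ × ℕ) → ZMod 2) + z) :=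
            nrmS_union_le _ _
        _ ≤ nrmZ ((u K : (ℕ × ℕ) → ZMod 2)) + 1 := add_le_add le_rfl hzK
        _ < ⊤ := ENNReal.add_lt_top.2 ⟨(u K).2, ENNReal.one_lt_top⟩
    refine ⟨⟨z, hzmem⟩, fun ε hε => ?_⟩
    obtain ⟨N, hN⟩ := he_cauchy (ENNReal.ofReal (ε / 2))
      (ENNReal.ofReal_pos.mpr (by linarith)) ENNReal.ofReal_ne_top
    refine ⟨N, fun n hn => ?_⟩
    have h1 : nrmZ ((u n : (ℕ × ℕ) → ZMod 2) + z) ≤ ENNReal.ofReal (ε / 2) :=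
      claim n N _ (fun m hm => hN n hn m hm)
    have h2 : dH (u n) ⟨z, hzmem⟩ ≤ (nrmZ ((u n : (ℕ × ℕ) → ZMod 2) + z)).toReal :=
      dH_le _ _
    have h3 : (nrmZ ((u n : (ℕ × ℕ) → ZMod 2) + z)).toReal ≤ ε / 2 := by
      refine le_trans (ENNReal.toReal_mono ENNReal.ofReal_ne_top h1) ?_
      rw [ENNReal.toReal_ofReal (by linarith)]
    linarith
  · -- separability
    refine ⟨Set.range (fun F : Finset (ℕ × ℕ) =>
      (⟨fun p => if p ∈ F then 1 else 0, hfin_ind F⟩ : ↥Hgrp)), Set.countable_range _, ?_⟩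
    intro z ε hε
    have hg : ∑' p, (suppZ (z : (ℕ × ℕ) → ZMod 2)).indicator wt p ≠ ⊤ := by
      have := z.2
      exact ne_of_lt this
    have htend := ENNReal.tendsto_tsum_compl_atTop_zero hg
    obtain ⟨F, hF⟩ := (htend.eventually_lt_const
      (show (0:ℝ≥0∞) < ENNReal.ofReal ε from ENNReal.ofReal_pos.mpr hε)).exists
    set F' := F.filter (fun p => (z : (ℕ × ℕ) → ZMod 2) p = 1) with hF'
    refine ⟨⟨fun p => if p ∈ F' then 1 else 0, hfin_ind F'⟩, ⟨F', rfl⟩, ?_⟩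
    set w : ↥Hgrp := ⟨fun p => if p ∈ F' then 1 else 0, hfin_ind F'⟩ with hw
    have hsub : suppZ ((z : (ℕ × ℕ) → ZMod 2) + ↑w)
        ⊆ {p | p ∉ F ∧ p ∈ suppZ (z : (ℕ × ℕ) → ZMod 2)} := by
      intro p hp
      have hp' : ((z : (ℕ × ℕ) → ZMod 2) p + (if p ∈ F' then 1 else 0)) = 1 := hp
      by_cases hpF' : p ∈ F'
      · exfalso
        have hz1 : (z : (ℕ × ℕ) → ZMod 2) p = 1 := (Finset.mem_filter.mp hpF').2
        rw [if_pos hpF', hz1] at hp'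
        exact absurd hp' (by decide)
      · rw [if_neg hpF', add_zero] at hp'
        refine ⟨fun hpF => hpF' (Finset.mem_filter.mpr ⟨hpF, hp'⟩), hp'⟩
    have hb : nrmZ ((z : (ℕ × ℕ) → ZMod 2) + ↑w) < ENNReal.ofReal ε := by
      refine lt_of_le_of_lt ?_ hF
      have heq : ∑' (x : { x // x ∉ F }), (suppZ (z : (ℕ × ℕ) → ZMod 2)).indicator wt ↑x
          = ∑' p, ({p : ℕ × ℕ | p ∉ F}).indicator
              ((suppZ (z : (ℕ × ℕ) → ZMod 2)).indicator wt) p :=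
        tsum_subtype {p : ℕ × ℕ | p ∉ F} ((suppZ (z : (ℕ × ℕ) → ZMod 2)).indicator wt)
      rw [heq, nrmZ, nrmS]
      refine ENNReal.tsum_le_tsum fun p => ?_
      by_cases hp : p ∈ suppZ ((z : (ℕ × ℕ) → ZMod 2) + ↑w)
      · rw [Set.indicator_of_mem hp]
        obtain ⟨hpF, hpz⟩ := hsub hp
        rw [Set.indicator_of_mem (show p ∈ {p : ℕ × ℕ | p ∉ F} from hpF),
          Set.indicator_of_mem hpz]
      · rw [Set.indicator_of_notMem hp]
        exact zero_le
    have h1 : dH z w ≤ (nrmZ ((z : (ℕ × ℕ) → ZMod 2) + ↑w)).toReal := dH_le z w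
    exact lt_of_le_of_lt h1 (ENNReal.toReal_lt_of_lt_ofReal hb)
  · -- continuity of addition
    intro z w ε hε
    refine ⟨ε / 6, by linarith, fun z' w' h1 h2 => ?_⟩
    have h3 : dH (z + w) (z' + w')
        ≤ (nrmZ (((z : (ℕ × ℕ) → ZMod 2) + ↑w) + (↑z' + ↑w'))).toReal := dH_le _ _
    have h4 : ((z : (ℕ × ℕ) → ZMod 2) + ↑w) + (↑z' + ↑w')
        = ((z : (ℕ × ℕ) → ZMod 2) + ↑z') + (↑w + ↑w') := add_add_add_comm _ _ _ _
    have h5 : nrmZ (((z : (ℕ × ℕ) → ZMod 2) + ↑w) + (↑z' + ↑w'))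
        ≤ nrmZ ((z : (ℕ × ℕ) → ZMod 2) + ↑z') + nrmZ ((w : (ℕ × ℕ) → ZMod 2) + ↑w') := by
      rw [h4]
      exact nrmZ_add_le _ _
    have h6 : (nrmZ (((z : (ℕ × ℕ) → ZMod 2) + ↑w) + (↑z' + ↑w'))).toReal
        ≤ (nrmZ ((z : (ℕ × ℕ) → ZMod 2) + ↑z')).toReal
          + (nrmZ ((w : (ℕ × ℕ) → ZMod 2) + ↑w')).toReal := by
      refine le_trans (ENNReal.toReal_mono ?_ h5) ?_
      · exact ENNReal.add_ne_top.mpr ⟨nrmZ_add_ne_top z z', nrmZ_add_ne_top w w'⟩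
      · rw [ENNReal.toReal_add (nrmZ_add_ne_top z z') (nrmZ_add_ne_top w w')]
    have h7 := le_dH z z'
    have h8 := le_dH w w'
    linarith
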